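/- For every integer n ≥ 2 there exists a chordal, gap-free simple graph G on n vertices with no isolated vertices such that τ_max(G) = ⌈2√n − 2⌉; hence the lower bound τ_max(G) ≥ ⌈2√n − 2⌉ is sharp for every n. -/

import Mathlib

/-- `W` is a vertex cover of `G`: it meets every edge. -/
def IsVC {V : Type*} (G : SimpleGraph V) (W : Finset V) : Prop :=
  ∀ ⦃u v : V⦄, G.Adj u v → u ∈ W ∨ v ∈ W

/-- `W` is a minimal vertex cover of `G`. -/
def IsMinVC {V : Type*} (G : SimpleGraph V) (W : Finset V) : Prop :=
  IsVC G W ∧ ∀ W' : Finset V, W' ⊂ W → ¬ IsVC G W'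

/-- The maximum size of a minimal vertex cover of `G`. -/
noncomputable def tauMax {V : Type*} (G : SimpleGraph V) : ℕ :=
  sSup {k : ℕ | ∃ W : Finset V, IsMinVC G W ∧ W.card = k}
/-- `G` is gap-free: any two disjoint edges are joined by a third edge meeting both. -/
def GapFree {V : Type*} (G : SimpleGraph V) : Prop :=
  ∀ ⦃a b c d : V⦄, G.Adj a b → G.Adj c d →
    ({a, b} : Set V) ∩ {c, d} = ∅ →
    ∃ u v : V, G.Adj u v ∧ (u ∈ ({a, b} : Set V) ∨ v ∈ ({a, b} : Set V)) ∧
      (u ∈ ({c, d} : Set V) ∨ v ∈ ({c, d} : Set V))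

/-- `G` is chordal: every cycle of length at least 4 has a chord, i.e. an edge between
two nonconsecutive vertices of the cycle. -/
def Chordal {V : Type*} (G : SimpleGraph V) : Prop :=
  ∀ k : ℕ, 4 ≤ k → ∀ f : ZMod k → V, Function.Injective f →
    (∀ i : ZMod k, G.Adj (f i) (f (i + 1))) →
    ∃ i j : ZMod k, G.Adj (f i) (f j) ∧ i + 1 ≠ j ∧ j + 1 ≠ i

/-- A clique on `[0,a)` with pendant leaves: leaf `j ≥ a` is attached to `(j-a)/b`. -/
def cliqueStar (n a b : ℕ) : SimpleGraph (Fin n) where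
  Adj u v := u ≠ v ∧ ((u.val < a ∧ v.val < a) ∨
    (u.val < a ∧ a ≤ v.val ∧ (v.val - a) / b = u.val) ∨
    (v.val < a ∧ a ≤ u.val ∧ (u.val - a) / b = v.val))
  symm := by
    constructor; rintro u v ⟨h1, h2⟩
    exact ⟨h1.symm, by tauto⟩
  loopless := by constructor; rintro u ⟨h1, -⟩; exact h1 rfl

lemma cs_adj {n a b : ℕ} {u v : Fin n} : (cliqueStar n a b).Adj u v ↔
    u ≠ v ∧ ((u.val < a ∧ v.val < a) ∨
    (u.val < a ∧ a ≤ v.val ∧ (v.val - a) / b = u.val) ∨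
    (v.val < a ∧ a ≤ u.val ∧ (u.val - a) / b = v.val)) := Iff.rfl

lemma cs_endpoint {n a b : ℕ} {u v : Fin n} (h : (cliqueStar n a b).Adj u v) :
    u.val < a ∨ v.val < a := by
  rcases h.2 with ⟨h1, -⟩ | ⟨h1, -⟩ | ⟨h1, -⟩ <;> tauto

lemma cs_leaf_neighbor {n a b : ℕ} {u v : Fin n} (h : (cliqueStar n a b).Adj u v)
    (hu : a ≤ u.val) : v.val < a ∧ (u.val - a) / b = v.val := by
  rcases h.2 with ⟨h1, -⟩ | ⟨h1, -⟩ | ⟨h1, h2, h3⟩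
  · omega
  · omega
  · exact ⟨h1, h3⟩

lemma zmod_cast_ne (k m : ℕ) (hm : 0 < m) (hk : m < k) : ((m : ℕ) : ZMod k) ≠ 0 := by
  intro h
  have := (ZMod.natCast_eq_zero_iff ..).mp h
  have := Nat.le_of_dvd hm this
  omega

lemma cs_chordal {n a b : ℕ} : Chordal (cliqueStar n a b) := by
  intro k hk f hf hadj
  -- every vertex on the cycle is in the clique
  have hcl : ∀ i : ZMod k, (f i).val < a := by
    intro i
    by_contra hi
    push_neg at hi
    have h1 := cs_leaf_neighbor (hadj i) hi
    have hadj2 : (cliqueStar n a b).Adj (f i) (f (i - 1)) := by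
      have := ((cliqueStar n a b).adj_symm (hadj (i - 1)))
      simpa [sub_add_cancel] using this
    have h2 := cs_leaf_neighbor hadj2 hi
    have heq : f (i + 1) = f (i - 1) := Fin.ext (by omega)
    have := hf heq
    have h20 : ((2 : ℕ) : ZMod k) = 0 := by push_cast; linear_combination this
    exact zmod_cast_ne k 2 (by norm_num) (by omega) h20
  -- now produce the chord 0 -- 2
  haveI : NeZero k := ⟨by omega⟩
  refine ⟨0, 2, ⟨fun h => ?_, Or.inl ⟨hcl 0, hcl 2⟩⟩, fun h => ?_, fun h => ?_⟩
  · have := hf h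
    exact zmod_cast_ne k 2 (by norm_num) (by omega) (by push_cast; linear_combination -this)
  · exact zmod_cast_ne k 1 (by norm_num) (by omega) (by push_cast; linear_combination -h)
  · exact zmod_cast_ne k 3 (by norm_num) (by omega) (by push_cast; linear_combination h)

lemma cs_gapfree {n a b : ℕ} : GapFree (cliqueStar n a b) := by
  intro x y z w hxy hzw hdisj
  have hx := cs_endpoint hxy
  have hz := cs_endpoint hzw
  have hd : ∀ p : Fin n, p ∈ ({x, y} : Set (Fin n)) → p ∉ ({z, w} : Set (Fin n)) := by
    intro p hp hq
    have : p ∈ ({x, y} : Set (Fin n)) ∩ {z, w} := ⟨hp, hq⟩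
    rw [hdisj] at this
    exact this
  obtain ⟨u, hu, hua⟩ : ∃ u : Fin n, u ∈ ({x, y} : Set (Fin n)) ∧ u.val < a := by
    rcases hx with h | h
    · exact ⟨x, Or.inl rfl, h⟩
    · exact ⟨y, Or.inr rfl, h⟩
  obtain ⟨v, hv, hva⟩ : ∃ v : Fin n, v ∈ ({z, w} : Set (Fin n)) ∧ v.val < a := by
    rcases hz with h | h
    · exact ⟨z, Or.inl rfl, h⟩
    · exact ⟨w, Or.inr rfl, h⟩
  have huv : u ≠ v := fun h => hd u hu (h ▸ hv)
  exact ⟨u, v, ⟨huv, Or.inl ⟨hua, hva⟩⟩, Or.inl hu, Or.inr hv⟩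

section Cover

variable {n a b t : ℕ}

lemma cs_bpos (hna : n ≤ a * (b + 1)) (x : Fin n) (hx : a ≤ x.val) : 0 < b := by
  rcases Nat.eq_zero_or_pos b with hb0 | hb
  · subst hb0
    simp only [Nat.zero_add, Nat.mul_one] at hna
    have := x.isLt
    omega
  · exact hb

lemma cs_parent_lt (hna : n ≤ a * (b + 1)) (x : Fin n) (hx : a ≤ x.val) :
    (x.val - a) / b < a := by
  have hb := cs_bpos hna x hx
  rw [Nat.div_lt_iff_lt_mul hb]
  have := x.isLt
  have : a * (b + 1) = a * b + a := by ring
  omega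

lemma cs_no_isolated (hab : a + b = t + 1) (ha : 2 ≤ a) (htn : t + 1 ≤ n)
    (hna : n ≤ a * (b + 1)) (v : Fin n) : ∃ u : Fin n, (cliqueStar n a b).Adj v u := by
  have han : a ≤ n := by omega
  by_cases hva : v.val < a
  · by_cases hv0 : v.val = 0
    · refine ⟨⟨1, by omega⟩, ⟨fun h => ?_, Or.inl ⟨hva, by show (1:ℕ) < a; omega⟩⟩⟩
      have h2 : v.val = (1 : ℕ) := congrArg Fin.val h
      omega
    · refine ⟨⟨0, by omega⟩, ⟨fun h => ?_, Or.inl ⟨hva, by show (0:ℕ) < a; omega⟩⟩⟩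
      have h2 : v.val = (0 : ℕ) := congrArg Fin.val h
      omega
  · push_neg at hva
    have hpa := cs_parent_lt hna v hva
    refine ⟨⟨(v.val - a) / b, by omega⟩, ⟨fun h => ?_, Or.inr (Or.inr ⟨by simpa using hpa, hva, rfl⟩)⟩⟩
    have h2 : v.val = (v.val - a) / b := congrArg Fin.val h
    omega

/-- The big minimal vertex cover: all vertices with value in `[1, t+1)`. -/
def W0 (n t : ℕ) (htn : t + 1 ≤ n) : Finset (Fin n) :=
  (Finset.Ico 1 (t + 1)).attachFin (fun m hm => by
    have := (Finset.mem_Ico.mp hm).2; omega)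

lemma mem_W0 {htn : t + 1 ≤ n} {x : Fin n} :
    x ∈ W0 n t htn ↔ 1 ≤ x.val ∧ x.val < t + 1 := by
  simp [W0, Finset.mem_attachFin, Finset.mem_Ico]

lemma card_W0 {htn : t + 1 ≤ n} : (W0 n t htn).card = t := by
  simp [W0, Finset.card_attachFin, Nat.card_Ico]

lemma cs_W0_minVC (hab : a + b = t + 1) (ha : 2 ≤ a) (htn : t + 1 ≤ n)
    (hna : n ≤ a * (b + 1)) : IsMinVC (cliqueStar n a b) (W0 n t htn) := by
  constructor
  · rintro u v ⟨hne, hcase⟩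
    have hvalne : u.val ≠ v.val := fun h => hne (Fin.ext h)
    rcases hcase with ⟨hu, hv⟩ | ⟨hu, hv, hpv⟩ | ⟨hv, hu, hpu⟩
    · rcases Nat.eq_zero_or_pos u.val with h0 | h1
      · right; rw [mem_W0]; omega
      · left; rw [mem_W0]; omega
    · rcases Nat.eq_zero_or_pos u.val with h0 | h1
      · right; rw [mem_W0]
        have hb := cs_bpos hna v hv
        have : v.val - a < b := by
          have := Nat.div_eq_zero_iff.mp (hpv.trans h0); omega
        omega
      · left; rw [mem_W0]; omega
    · rcases Nat.eq_zero_or_pos v.val with h0 | h1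
      · left; rw [mem_W0]
        have hb := cs_bpos hna u hu
        have : u.val - a < b := by
          have := Nat.div_eq_zero_iff.mp (hpu.trans h0); omega
        omega
      · right; rw [mem_W0]; omega
  · intro W' hss hvc
    obtain ⟨x, hxW0, hxW'⟩ := Finset.exists_of_ssubset hss
    rw [mem_W0] at hxW0
    have hz : (0 : ℕ) < n := by omega
    have hadj : (cliqueStar n a b).Adj ⟨0, hz⟩ x := by
      refine ⟨fun h => ?_, ?_⟩
      · have h2 : (0 : ℕ) = x.val := congrArg Fin.val h
        omega
      · by_cases hx : x.val < a
        · exact Or.inl ⟨by show (0:ℕ) < a; omega, hx⟩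
        · push_neg at hx
          refine Or.inr (Or.inl ⟨by show (0:ℕ) < a; omega, hx, ?_⟩)
          simp only
          exact Nat.div_eq_of_lt (by omega)
    rcases hvc hadj with h | h
    · have := hss.subset h
      rw [mem_W0] at this
      simp at this
    · exact hxW' h

lemma cs_minVC_le (hab : a + b = t + 1) (ha : 2 ≤ a) (htn : t + 1 ≤ n)
    (hna : n ≤ a * (b + 1)) (W : Finset (Fin n))
    (hW : IsMinVC (cliqueStar n a b) W) : W.card ≤ t := by
  classical
  obtain ⟨hcov, hmin⟩ := hW
  by_cases hC : ∀ x : Fin n, x.val < a → x ∈ W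
  · -- case: the whole clique is in W; then W is exactly the clique
    have hWclique : ∀ x ∈ W, x.val < a := by
      intro x hxW
      by_contra hx
      push_neg at hx
      refine hmin (W.erase x) (Finset.erase_ssubset hxW) ?_
      intro u v huv
      rcases hcov huv with h | h
      · by_cases hul : u = x
        · subst hul
          obtain ⟨hva, -⟩ := cs_leaf_neighbor huv hx
          refine Or.inr (Finset.mem_erase.mpr ⟨fun hvu => ?_, hC v hva⟩)
          have h2 := congrArg Fin.val hvu
          omega
        · exact Or.inl (Finset.mem_erase.mpr ⟨hul, h⟩)
      · by_cases hvl : v = x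
        · subst hvl
          obtain ⟨hua, -⟩ := cs_leaf_neighbor ((cliqueStar n a b).adj_symm huv) hx
          refine Or.inl (Finset.mem_erase.mpr ⟨fun huu => ?_, hC u hua⟩)
          have h2 := congrArg Fin.val huu
          omega
        · exact Or.inr (Finset.mem_erase.mpr ⟨hvl, h⟩)
    have hb : 0 < b := by
      rcases Nat.eq_zero_or_pos b with hb0 | hb
      · exfalso
        subst hb0
        simp only [Nat.zero_add, Nat.mul_one] at hna
        have h1n : (1 : ℕ) < n := by omega
        have h1a : (1 : ℕ) < a := ha
        have hx1 : (⟨1, h1n⟩ : Fin n) ∈ W := hC _ (by simpa using h1a)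
        refine hmin (W.erase ⟨1, h1n⟩) (Finset.erase_ssubset hx1) ?_
        intro u v huv
        have hu : u ∈ W := hC u (by have := u.isLt; omega)
        have hv : v ∈ W := hC v (by have := v.isLt; omega)
        by_cases hue : u = ⟨1, h1n⟩
        · right
          refine Finset.mem_erase.mpr ⟨fun h => huv.1 (hue ▸ h.symm ▸ rfl), hv⟩
        · exact Or.inl (Finset.mem_erase.mpr ⟨hue, hu⟩)
      · exact hb
    have hcard : W.card ≤ a := by
      have := Finset.card_le_card_of_injOn Fin.val
        (fun x hx => Finset.mem_range.mpr (hWclique x hx))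
        (fun x _ y _ h => Fin.val_injective h)
      simpa using this
    omega
  · push_neg at hC
    obtain ⟨v, hva, hvW⟩ := hC
    have hclA : ∀ u : Fin n, u.val < a → u ≠ v → u ∈ W := by
      intro u hu hne
      have hadj : (cliqueStar n a b).Adj u v := ⟨hne, Or.inl ⟨hu, hva⟩⟩
      rcases hcov hadj with h | h
      · exact h
      · exact absurd h hvW
    have hleaf : ∀ x ∈ W, a ≤ x.val → (x.val - a) / b = v.val := by
      intro x hxW hxa
      by_contra hne
      have hb := cs_bpos hna x hxa
      have hpa := cs_parent_lt hna x hxa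
      refine hmin (W.erase x) (Finset.erase_ssubset hxW) ?_
      intro u w huw
      rcases hcov huw with h | h
      · by_cases hue : u = x
        · subst hue
          obtain ⟨hwa, hwp⟩ := cs_leaf_neighbor huw hxa
          refine Or.inr (Finset.mem_erase.mpr ⟨fun hwu => ?_, hclA w hwa (fun hwv => ?_)⟩)
          · have h2 := congrArg Fin.val hwu
            omega
          · apply hne; rw [hwp, hwv]
        · exact Or.inl (Finset.mem_erase.mpr ⟨hue, h⟩)
      · by_cases hwe : w = x
        · subst hwe
          obtain ⟨hua, hup⟩ := cs_leaf_neighbor ((cliqueStar n a b).adj_symm huw) hxa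
          refine Or.inl (Finset.mem_erase.mpr ⟨fun huu => ?_, hclA u hua (fun huv => ?_)⟩)
          · have h2 := congrArg Fin.val huu
            omega
          · apply hne; rw [hup, huv]
        · exact Or.inr (Finset.mem_erase.mpr ⟨hwe, h⟩)
    set T : Finset ℕ :=
      (Finset.range a).erase v.val ∪ Finset.Ico (a + b * v.val) (a + b * v.val + b) with hT
    have hsub : ∀ x ∈ W, x.val ∈ T := by
      intro x hxW
      rw [hT]
      simp only [Finset.mem_union, Finset.mem_erase, Finset.mem_range, Finset.mem_Ico]
      by_cases hx : x.val < a
      · left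
        refine ⟨fun h => hvW ?_, hx⟩
        have : x = v := Fin.ext h
        exact this ▸ hxW
      · push_neg at hx
        right
        have hdiv := hleaf x hxW hx
        have hb := cs_bpos hna x hx
        have h1 : b * v.val + (x.val - a) % b = x.val - a := by
          rw [← hdiv]; exact Nat.div_add_mod _ _
        have hm : (x.val - a) % b < b := Nat.mod_lt _ hb
        generalize b * v.val = P at h1 ⊢
        generalize (x.val - a) % b = r at h1 hm
        omega
    have hcard : W.card ≤ T.card :=
      Finset.card_le_card_of_injOn Fin.val hsub (fun x _ y _ h => Fin.val_injective h)
    have hTcard : T.card ≤ (a - 1) + b := by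
      rw [hT]
      refine le_trans (Finset.card_union_le _ _) ?_
      have h1 : ((Finset.range a).erase v.val).card = a - 1 := by
        rw [Finset.card_erase_of_mem (Finset.mem_range.mpr hva), Finset.card_range]
      have h2 : (Finset.Ico (a + b * v.val) (a + b * v.val + b)).card = b := by
        rw [Nat.card_Ico]; omega
      omega
    omega

end Cover

theorem stmt_7 (n : ℕ) (hn : 2 ≤ n) :
    ∃ G : SimpleGraph (Fin n), Chordal G ∧ GapFree G ∧
      (∀ v : Fin n, ∃ u : Fin n, G.Adj v u) ∧
      tauMax G = ⌈2 * Real.sqrt n - 2⌉₊ := by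
  set t : ℕ := ⌈2 * Real.sqrt n - 2⌉₊ with htdef
  have hn0 : (0 : ℝ) ≤ (n : ℝ) := by positivity
  have hsq : Real.sqrt n * Real.sqrt n = (n : ℝ) := Real.mul_self_sqrt hn0
  have hs0 : (0 : ℝ) ≤ Real.sqrt n := Real.sqrt_nonneg _
  have h1s : (1 : ℝ) < Real.sqrt n := by
    have h1 : (1 : ℝ) < (n : ℝ) := by exact_mod_cast (by omega : 1 < n)
    calc (1 : ℝ) = Real.sqrt 1 := by simp
    _ < Real.sqrt n := Real.sqrt_lt_sqrt (by norm_num) h1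
  have ht1 : 1 ≤ t := Nat.ceil_pos.mpr (by linarith)
  have htn : t + 1 ≤ n := by
    have hle : 2 * Real.sqrt n - 2 ≤ ((n - 1 : ℕ) : ℝ) := by
      rw [Nat.cast_sub (by omega : 1 ≤ n)]
      push_cast
      nlinarith [sq_nonneg (Real.sqrt n - 1)]
    have := Nat.ceil_le.mpr hle
    omega
  have hceil : (2 * Real.sqrt n - 2 : ℝ) ≤ (t : ℝ) := Nat.le_ceil _
  have hsq4 : 4 * n ≤ (t + 2) ^ 2 := by
    have hr : (4 * n : ℝ) ≤ ((t : ℝ) + 2) ^ 2 := by nlinarith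
    have hr2 : ((4 * n : ℕ) : ℝ) ≤ (((t + 2) ^ 2 : ℕ) : ℝ) := by push_cast; linarith
    exact_mod_cast hr2
  set a : ℕ := (t + 3) / 2 with hadef
  set b : ℕ := t + 1 - a with hbdef
  have hab : a + b = t + 1 := by omega
  have ha2 : 2 ≤ a := by omega
  have hna : n ≤ a * (b + 1) := by
    rcases Nat.even_or_odd t with ⟨s, hs⟩ | ⟨s, hs⟩
    · have haa : a = s + 1 := by omega
      have hbb : b + 1 = s + 1 := by omega
      rw [haa, hbb]
      nlinarith [hsq4, hs]
    · have haa : a = s + 2 := by omega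
      have hbb : b + 1 = s + 1 := by omega
      rw [haa, hbb]
      have h9 : 4 * n ≤ 4 * ((s + 2) * (s + 1)) + 1 := by nlinarith [hsq4, hs]
      omega
  refine ⟨cliqueStar n a b, cs_chordal, cs_gapfree, cs_no_isolated hab ha2 htn hna, ?_⟩
  have hgreat : IsGreatest {k : ℕ | ∃ W : Finset (Fin n),
      IsMinVC (cliqueStar n a b) W ∧ W.card = k} t := by
    constructor
    · exact ⟨W0 n t htn, cs_W0_minVC hab ha2 htn hna, card_W0⟩
    · rintro k ⟨W, hW, rfl⟩
      exact cs_minVC_le hab ha2 htn hna W hW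
  rw [tauMax]
  exact hgreat.csSup_eq
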